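/- Let f : ℝⁿ → ℝ be differentiable and λ > 0. Then for every x ∈ ℝⁿ, every t > 0, and every index i, one has |G_t(x)_i| ≤ |g(x)_i|; consequently ‖G_t(x)‖ ≤ ‖g(x)‖ for all t > 0. -/

import Mathlib

open scoped RealInnerProductSpace

noncomputable section

/-- `ℝⁿ` with the Euclidean norm. -/
abbrev E (n : ℕ) := EuclideanSpace ℝ (Fin n)

/-- The vector `g(x)` measuring first-order stationarity of `f + lam‖·‖₁`. -/
def gvec (n : ℕ) (f : E n → ℝ) (lam : ℝ) (x : E n) : E n := WithLp.toLp 2 fun i =>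
  if 0 < x i then gradient f x i + lam
  else if x i < 0 then gradient f x i - lam
  else gradient f x i - min (max (-lam) (gradient f x i)) lam

/-- The proximal-gradient residual `G_t(x) = t (x - prox_{(lam/t)‖·‖₁}(x - ∇f(x)/t))`. -/
def Gres (n : ℕ) (f : E n → ℝ) (lam t : ℝ) (x : E n) : E n := WithLp.toLp 2 fun i =>
  if (gradient f x i + lam) / t < x i then gradient f x i + lam
  else if x i < (gradient f x i - lam) / t then gradient f x i - lam
  else t * x i

/-- The proximal-gradient update `P_t(x) = prox_{(lam/t)‖·‖₁}(x - ∇f(x)/t)` (soft-thresholding). -/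
def Pt (n : ℕ) (f : E n → ℝ) (lam t : ℝ) (x : E n) : E n := WithLp.toLp 2 fun i =>
  if lam / t < x i - gradient f x i / t then x i - gradient f x i / t - lam / t
  else if x i - gradient f x i / t < -(lam / t) then x i - gradient f x i / t + lam / t
  else 0

/-- The objective `φ(x) = f(x) + lam ‖x‖₁`. -/
def phi (n : ℕ) (f : E n → ℝ) (lam : ℝ) (x : E n) : ℝ := f x + lam * ∑ i, |x i|

/-- The Hessian of `f` at `x`, as a continuous linear map. -/
def hess (n : ℕ) (f : E n → ℝ) (x : E n) : E n →L[ℝ] E n := fderiv ℝ (gradient f) x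

/-- The scaling map `S_{x,ε}`: identity on coordinates with `|x_i| > √ε`, multiplication by
`x_i` on the others. -/
def Smap (n : ℕ) (x : E n) (eps : ℝ) (u : E n) : E n := WithLp.toLp 2 fun i =>
  if Real.sqrt eps < |x i| then u i else x i * u i

/-- The relaxed first-order residual vector `g^ε(x)`. -/
def gveps (n : ℕ) (f : E n → ℝ) (lam eps : ℝ) (x : E n) : E n := WithLp.toLp 2 fun i =>
  if Real.sqrt eps < x i then gradient f x i + lam
  else if x i < -Real.sqrt eps then gradient f x i - lam
  else gradient f x i -
    min (max (-(lam + eps ^ ((3:ℝ)/4))) (gradient f x i)) (lam + eps ^ ((3:ℝ)/4))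


lemma aux_stmt3 (lam t d xi : ℝ) (hlam : 0 < lam) (ht : 0 < t) :
    |(if (d + lam) / t < xi then d + lam else if xi < (d - lam) / t then d - lam else t * xi)|
      ≤ |(if 0 < xi then d + lam else if xi < 0 then d - lam
          else d - min (max (-lam) d) lam)| := by
  have h1 : (d + lam) / t < xi ↔ d + lam < xi * t := div_lt_iff₀ ht
  have h2 : xi < (d - lam) / t ↔ xi * t < d - lam := lt_div_iff₀ ht
  simp only [h1, h2, mul_comm t xi]
  rcases lt_trichotomy xi 0 with hx | hx | hx
  · rw [if_neg (show ¬ (0:ℝ) < xi by linarith), if_pos hx]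
    have hxt : xi * t < 0 := mul_neg_of_neg_of_pos hx ht
    split_ifs with a b
    · rw [abs_of_nonpos (by linarith), abs_of_nonpos (by linarith)]; linarith
    · exact le_refl _
    · push_neg at b
      rw [abs_of_nonpos hxt.le, abs_of_nonpos (by linarith)]; linarith
  · subst hx
    rw [if_neg (lt_irrefl 0), if_neg (lt_irrefl 0)]
    simp only [zero_mul]
    split_ifs with a b
    · have hm : min (max (-lam) d) lam = -lam := by
        rw [max_eq_left (by linarith), min_eq_left (by linarith)]
      rw [hm]; ring_nf; exact le_refl _
    · have hm : min (max (-lam) d) lam = lam := by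
        rw [max_eq_right (by linarith), min_eq_right (by linarith)]
      rw [hm]
    · simp
  · rw [if_pos hx]
    have hxt : 0 < xi * t := mul_pos hx ht
    split_ifs with a b
    · exact le_refl _
    · rw [abs_of_nonneg (by linarith), abs_of_nonneg (by linarith)]; linarith
    · push_neg at a
      rw [abs_of_nonneg hxt.le, abs_of_nonneg (by linarith)]; linarith

/-- Componentwise, `|G_t(x)_i| ≤ |g(x)_i|` for every `t > 0`; consequently
`‖G_t(x)‖ ≤ ‖g(x)‖`. -/
theorem stmt3 {n : ℕ} (f : E n → ℝ) (hf : Differentiable ℝ f) (lam : ℝ) (hlam : 0 < lam) :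
    ∀ x : E n, ∀ t : ℝ, 0 < t →
      (∀ i, |Gres n f lam t x i| ≤ |gvec n f lam x i|) ∧
        ‖Gres n f lam t x‖ ≤ ‖gvec n f lam x‖ := by
  intro x t ht
  have key : ∀ i, |Gres n f lam t x i| ≤ |gvec n f lam x i| := fun i =>
    aux_stmt3 lam t (gradient f x i) (x i) hlam ht
  refine ⟨key, ?_⟩
  rw [EuclideanSpace.norm_eq, EuclideanSpace.norm_eq]
  apply Real.sqrt_le_sqrt
  apply Finset.sum_le_sum
  intro i _
  simp only [Real.norm_eq_abs]
  exact pow_le_pow_left₀ (abs_nonneg _) (key i) 2
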